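/- Let k be a field and n ≥ m+2 ≥ 3. Set J = (x_{m+3},…,x_n) ⊆ k[x_0,…,x_n] and let I_{X_0} = (x_1,…,x_{m+1})·(x_{m+1},x_{m+2}) + J (the ideal of the (m+2)-dimensional sundial) and I_H = (x_{m+1}) + J (the ideal of the linear span H of the line and the m-plane composing the sundial). Then the colon ideal satisfies I_{X_0} : I_H = (x_1,…,x_n), i.e., the residual scheme Res_H(X_0) is the single reduced point [1:0:⋯:0]. -/

import Mathlib

open MvPolynomial

/-- If `f` is killed by the projection setting all variables except `x₀` to zero,
then `f` lies in the ideal generated by the other variables. -/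
lemma ker_proj_mem {k : Type} [Field k] {N : ℕ}
    (g : Fin (N+1) → MvPolynomial (Fin (N+1)) k)
    (hg0 : g 0 = X 0) (hg : ∀ i, i ≠ 0 → g i = 0)
    (f : MvPolynomial (Fin (N+1)) k) (hf : aeval g f = 0) :
    f ∈ Ideal.span (X '' {i : Fin (N+1) | 1 ≤ (i : ℕ)}) := by
  have key : ∀ p : MvPolynomial (Fin (N+1)) k,
      p - aeval g p ∈ Ideal.span (X '' {i : Fin (N+1) | 1 ≤ (i : ℕ)}) := by
    intro p
    induction p using MvPolynomial.induction_on with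
    | C a => simp
    | add p q hp hq =>
        rw [map_add]
        have h : p + q - (aeval g p + aeval g q)
            = (p - aeval g p) + (q - aeval g q) := by ring
        rw [h]; exact add_mem hp hq
    | mul_X p i hp =>
        rw [map_mul, aeval_X]
        by_cases h : i = 0
        · subst h
          rw [hg0]
          have h2 : p * X 0 - aeval g p * X 0 = (p - aeval g p) * X 0 := by ring
          rw [h2]
          exact Ideal.mul_mem_right _ _ hp
        · rw [hg i h, mul_zero, sub_zero]
          refine Ideal.mul_mem_left _ _ (Ideal.subset_span ?_)
          refine ⟨i, ?_, rfl⟩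
          have : (i : ℕ) ≠ 0 := fun h0 => h (Fin.ext h0)
          simpa using Nat.one_le_iff_ne_zero.mpr this
  have := key f
  rwa [hf, sub_zero] at this

/-- The residual of the `(m+2)`-dimensional sundial with respect to the span `H`
of its line and its `m`-plane is the single reduced point `[1:0:⋯:0]`. -/
theorem stmt6 (k : Type) [Field k] (n m : ℕ) (hm : 1 ≤ m) (hn : m + 2 ≤ n) :
    Submodule.colon
      ((Ideal.span (MvPolynomial.X '' {i : Fin (n+1) | 1 ≤ (i : ℕ) ∧ (i : ℕ) ≤ m + 1})
            : Ideal (MvPolynomial (Fin (n+1)) k))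
          * Ideal.span {MvPolynomial.X (⟨m+1, by omega⟩ : Fin (n+1)),
              MvPolynomial.X (⟨m+2, by omega⟩ : Fin (n+1))}
        + Ideal.span (MvPolynomial.X '' {i : Fin (n+1) | m + 3 ≤ (i : ℕ)})
          : Submodule (MvPolynomial (Fin (n+1)) k) (MvPolynomial (Fin (n+1)) k))
      (Ideal.span {MvPolynomial.X (⟨m+1, by omega⟩ : Fin (n+1))}
        + Ideal.span (MvPolynomial.X '' {i : Fin (n+1) | m + 3 ≤ (i : ℕ)})
          : Submodule (MvPolynomial (Fin (n+1)) k) (MvPolynomial (Fin (n+1)) k))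
    = Ideal.span (MvPolynomial.X '' {i : Fin (n+1) | 1 ≤ (i : ℕ)}) := by
  set R := MvPolynomial (Fin (n+1)) k
  have hb1 : m + 1 < n + 1 := by omega
  have hb2 : m + 2 < n + 1 := by omega
  set e1 : Fin (n+1) := ⟨m+1, hb1⟩ with he1d
  set e2 : Fin (n+1) := ⟨m+2, hb2⟩ with he2d
  have hv1 : (e1 : ℕ) = m + 1 := rfl
  have hv2 : (e2 : ℕ) = m + 2 := rfl
  set I1 : Ideal R := Ideal.span (X '' {i : Fin (n+1) | 1 ≤ (i : ℕ) ∧ (i : ℕ) ≤ m + 1})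
  set I2 : Ideal R := Ideal.span {X e1, X e2}
  set IJ : Ideal R := Ideal.span (X '' {i : Fin (n+1) | m + 3 ≤ (i : ℕ)})
  set T : Ideal R := Ideal.span (X '' {i : Fin (n+1) | 1 ≤ (i : ℕ)})
  show Submodule.colon (I1 * I2 + IJ) (Ideal.span {(X e1 : R)} + IJ) = T
  have he1ne0 : e1 ≠ 0 := by
    intro h; have := congrArg Fin.val h; rw [hv1] at this; simp at this
  have he2ne0 : e2 ≠ 0 := by
    intro h; have := congrArg Fin.val h; rw [hv2] at this; simp at this
  have he12 : e2 ≠ e1 := by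
    intro h; have := congrArg Fin.val h; rw [hv1, hv2] at this; omega
  apply le_antisymm
  · -- colon ≤ T
    intro f hf
    have hXe1B : X e1 ∈ Ideal.span {X e1} + IJ :=
      Ideal.mem_sup_left (Ideal.subset_span rfl)
    have h1 : f * X e1 ∈ I1 * I2 + IJ := by
      have := Submodule.mem_colon.mp hf (X e1) hXe1B
      simpa [smul_eq_mul] using this
    -- the partial evaluation keeping only x₀ and x_{m+1}
    set g : Fin (n+1) → R := fun i => if i = 0 ∨ i = e1 then X i else 0 with hgd
    have hg0 : g 0 = X 0 := by simp [hgd]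
    have hge1 : g e1 = X e1 := by simp [hgd]
    have c1 : I1 ≤ Ideal.comap (aeval g) (Ideal.span {(X e1 : R)}) := by
      rw [Ideal.span_le]
      rintro _ ⟨i, hi, rfl⟩
      simp only [Set.mem_setOf_eq] at hi
      rw [SetLike.mem_coe, Ideal.mem_comap, aeval_X]
      by_cases h : i = e1
      · subst h; rw [hge1]; exact Ideal.subset_span rfl
      · have hne : ¬(i = 0 ∨ i = e1) := by
          rintro (h0 | h0)
          · rw [h0] at hi; simp at hi
          · exact h h0
        rw [hgd]; simp only [if_neg hne]; exact zero_mem _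
    have c2 : I2 ≤ Ideal.comap (aeval g) (Ideal.span {(X e1 : R)}) := by
      rw [Ideal.span_le]
      rintro x hx
      rcases hx with h | h
      · rw [h, SetLike.mem_coe, Ideal.mem_comap, aeval_X, hge1]
        exact Ideal.subset_span rfl
      · rw [Set.mem_singleton_iff] at h
        rw [h, SetLike.mem_coe, Ideal.mem_comap, aeval_X]
        have hne : ¬(e2 = 0 ∨ e2 = e1) := by
          rintro (h0 | h0)
          · exact he2ne0 h0
          · exact he12 h0
        rw [hgd]; simp only [if_neg hne]; exact zero_mem _
    have c3 : IJ ≤ Ideal.comap (aeval g) (Ideal.span {(X e1 : R) * X e1}) := by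
      rw [Ideal.span_le]
      rintro _ ⟨i, hi, rfl⟩
      simp only [Set.mem_setOf_eq] at hi
      rw [SetLike.mem_coe, Ideal.mem_comap, aeval_X]
      have hne : ¬(i = 0 ∨ i = e1) := by
        rintro (h0 | h0)
        · rw [h0] at hi; simp at hi
        · rw [h0] at hi; omega
      rw [hgd]; simp only [if_neg hne]; exact zero_mem _
    have hA : I1 * I2 + IJ ≤ Ideal.comap (aeval g) (Ideal.span {(X e1 : R) * X e1}) := by
      rw [Ideal.add_eq_sup]
      apply sup_le
      · rw [Ideal.mul_le]
        intro r hr s hs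
        rw [Ideal.mem_comap, map_mul, Ideal.mem_span_singleton]
        exact mul_dvd_mul
          (Ideal.mem_span_singleton.mp (c1 hr))
          (Ideal.mem_span_singleton.mp (c2 hs))
      · exact c3
    have hdvd2 : (X e1 : R) * X e1 ∣ aeval g f * X e1 := by
      have := hA h1
      rw [Ideal.mem_comap, map_mul, aeval_X, hge1, Ideal.mem_span_singleton] at this
      exact this
    have hdvd : (X e1 : R) ∣ aeval g f := by
      obtain ⟨c, hc⟩ := hdvd2
      refine ⟨c, mul_right_cancel₀ (X_ne_zero e1) ?_⟩
      rw [hc]; ring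
    set g' : Fin (n+1) → R := fun i => if i = e1 then 0 else X i with hg'd
    have hgg : aeval g' (aeval g f) = aeval (fun i => if i = 0 then (X i : R) else 0) f := by
      rw [comp_aeval_apply]
      have hfun : (fun i => aeval g' (g i))
          = (fun i : Fin (n+1) => if i = 0 then (X i : R) else 0) := by
        funext i
        by_cases h0 : i = 0
        · subst h0
          rw [hg0, aeval_X, hg'd]
          simp [Ne.symm he1ne0]
        · by_cases h1' : i = e1
          · subst h1'
            rw [hge1, aeval_X, hg'd]
            simp [he1ne0]
          · rw [hgd]
            simp [h0, h1']
      rw [hfun]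
    have hker : aeval (fun i => if i = 0 then (X i : R) else 0) f = 0 := by
      rw [← hgg]
      obtain ⟨c, hc⟩ := hdvd
      rw [hc, map_mul, aeval_X, hg'd]
      simp
    exact ker_proj_mem _ (by simp) (fun i hi => by simp [hi]) f hker
  · -- T ≤ colon
    intro f hf
    rw [Submodule.mem_colon]
    intro p hp
    rw [smul_eq_mul]
    have hTB : T * (Ideal.span {(X e1 : R)} + IJ) ≤ I1 * I2 + IJ := by
      rw [mul_add, Ideal.add_eq_sup]
      apply sup_le
      · rw [Ideal.span_mul_span', Ideal.span_le]
        rintro _ ⟨_, ⟨i, hi, rfl⟩, y, hy, rfl⟩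
        rw [Set.mem_singleton_iff] at hy
        subst hy
        simp only [Set.mem_setOf_eq] at hi
        rw [SetLike.mem_coe]
        by_cases h2 : (i : ℕ) ≤ m + 1
        · exact Ideal.mem_sup_left (Ideal.mul_mem_mul
            (Ideal.subset_span ⟨i, ⟨hi, h2⟩, rfl⟩)
            (Ideal.subset_span (Set.mem_insert _ _)))
        · by_cases h3 : (i : ℕ) = m + 2
          · have hie : i = e2 := Fin.ext (by rw [hv2, h3])
            subst hie
            have hmem : X e1 * X e2 ∈ I1 * I2 + IJ :=
              Ideal.mem_sup_left (Ideal.mul_mem_mul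
                (Ideal.subset_span ⟨e1, ⟨by omega, by omega⟩, rfl⟩)
                (Ideal.subset_span (Set.mem_insert_of_mem _ rfl)))
            show X e2 * X e1 ∈ I1 * I2 + IJ
            rwa [mul_comm (X e2) (X e1)]
          · have h4 : m + 3 ≤ (i : ℕ) := by omega
            exact Ideal.mem_sup_right (Ideal.mul_mem_right _ _
              (Ideal.subset_span ⟨i, h4, rfl⟩))
      · exact le_trans Ideal.mul_le_right le_sup_right
    exact hTB (Ideal.mul_mem_mul hf hp)
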